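/- If γ₁ and γ₂ are elements of Γ(1/8) = { ∑_{k=0}^N a_k 8^k : a_k ∈ {0,2}, N ∈ ℕ } with γ₁ ≠ γ₂, then γ₁ − γ₂ belongs to the set Z = { 8^k(2ℓ+1)/4 : k ≥ 1, ℓ ∈ ℤ }. -/
import Mathlib


/-- The set `Γ(1/8)` of finite sums `∑ aₖ 8^k` with digits `aₖ ∈ {0,2}`. -/
def Gamma8 : Set ℝ :=
  {x | ∃ (N : ℕ) (a : ℕ → ℝ), (∀ k, a k = 0 ∨ a k = 2) ∧
    x = ∑ k ∈ Finset.range N, a k * 8 ^ k}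

/-- The zero set `Z = { 8^k (2ℓ+1) / 4 : k ≥ 1, ℓ ∈ ℤ }`. -/
def Z8 : Set ℝ :=
  {t | ∃ (k : ℕ) (l : ℤ), 1 ≤ k ∧ t = 8 ^ k * (2 * l + 1) / 4}

private lemma key8 (N : ℕ) : ∀ (d : ℕ → ℤ), (∀ k, d k = -1 ∨ d k = 0 ∨ d k = 1) →
    (∑ k ∈ Finset.range N, d k * 8 ^ k ≠ 0) →
    ∃ m u, Odd u ∧ ∑ k ∈ Finset.range N, d k * 8 ^ k = 8 ^ m * u := by
  induction N with
  | zero => intro d _ hn; simp at hn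
  | succ N ih =>
    intro d hd hn
    rw [Finset.sum_range_succ'] at hn ⊢
    have hrw : ∑ k ∈ Finset.range N, d (k + 1) * 8 ^ (k + 1)
        = 8 * ∑ k ∈ Finset.range N, d (k + 1) * 8 ^ k := by
      rw [Finset.mul_sum]; apply Finset.sum_congr rfl; intro k _; ring
    rw [hrw] at hn ⊢
    set s := ∑ k ∈ Finset.range N, d (k + 1) * 8 ^ k with hs
    rcases hd 0 with h0 | h0 | h0
    · exact ⟨0, 8 * s + d 0 * 8 ^ 0, ⟨4 * s - 1, by rw [h0]; ring⟩, by ring⟩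
    · have hs0 : s ≠ 0 := by
        intro h; apply hn; rw [h, h0]; ring
      obtain ⟨m, u, hu, hsu⟩ := ih (fun k => d (k + 1)) (fun k => hd (k + 1)) hs0
      exact ⟨m + 1, u, hu, by rw [h0, hs, hsu]; ring⟩
    · exact ⟨0, 8 * s + d 0 * 8 ^ 0, ⟨4 * s, by rw [h0]; ring⟩, by ring⟩

private lemma gamma8_int (x : ℝ) (hx : x ∈ Gamma8) :
    ∃ (N₀ : ℕ) (e : ℕ → ℤ), (∀ k, e k = 0 ∨ e k = 1) ∧ ∀ N, N₀ ≤ N →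
      x = 2 * ((∑ k ∈ Finset.range N, e k * 8 ^ k : ℤ) : ℝ) := by
  obtain ⟨N₁, a, ha, hxa⟩ := hx
  refine ⟨N₁, fun k => if k < N₁ ∧ a k = 2 then 1 else 0,
    fun k => by by_cases h : k < N₁ ∧ a k = 2 <;> simp [h], fun N hN => ?_⟩
  push_cast
  rw [Finset.mul_sum, hxa]
  rw [← Finset.sum_subset (Finset.range_subset_range.mpr hN)
    (fun k _ hk => by
      have : ¬ (k < N₁) := by simpa using hk
      simp [this])]
  apply Finset.sum_congr rfl
  intro k hk
  have hk' : k < N₁ := Finset.mem_range.mp hk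
  rcases ha k with h | h
  · simp [hk', h]
  · simp [hk', h]

theorem stmt9 (γ₁ γ₂ : ℝ) (h₁ : γ₁ ∈ Gamma8) (h₂ : γ₂ ∈ Gamma8) (hne : γ₁ ≠ γ₂) :
    γ₁ - γ₂ ∈ Z8 := by
  obtain ⟨N₁, e₁, he₁, hx₁⟩ := gamma8_int γ₁ h₁
  obtain ⟨N₂, e₂, he₂, hx₂⟩ := gamma8_int γ₂ h₂
  set N := max N₁ N₂
  have h1 := hx₁ N (le_max_left _ _)
  have h2 := hx₂ N (le_max_right _ _)
  set d : ℕ → ℤ := fun k => e₁ k - e₂ k with hd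
  have hdval : ∀ k, d k = -1 ∨ d k = 0 ∨ d k = 1 := by
    intro k; rcases he₁ k with h | h <;> rcases he₂ k with h' | h' <;> simp [hd, h, h']
  have hdiff : γ₁ - γ₂ = 2 * ((∑ k ∈ Finset.range N, d k * 8 ^ k : ℤ) : ℝ) := by
    rw [h1, h2, ← mul_sub]
    congr 1
    push_cast [hd]
    rw [← Finset.sum_sub_distrib]
    apply Finset.sum_congr rfl
    intro k _; ring
  have hn : (∑ k ∈ Finset.range N, d k * 8 ^ k : ℤ) ≠ 0 := by
    intro h
    apply hne
    have := hdiff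
    rw [h] at this
    simp at this
    linarith [this]
  obtain ⟨m, u, hu, hsum⟩ := key8 N d hdval hn
  obtain ⟨l, hl⟩ := hu
  refine ⟨m + 1, l, by omega, ?_⟩
  rw [hdiff, hsum, hl]
  push_cast
  ring
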